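/- Let V be a real inner product space and let n ∈ V be a unit vector (⟪n, n⟫ = 1). For every integer p ≥ 2 and all x, c ∈ V, the element f(x) = (ι(x) * ι(n))^p * ι(n) + ι(c) of the Clifford algebra Cl(V) lies in the grade-1 subspace, i.e. there exists y ∈ V with (ι(x) * ι(n))^p * ι(n) + ι(c) = ι(y). In particular the Clifford Julia operator f is a well-defined map from V to V. -/

import Mathlib

open scoped InnerProductSpace

/-- The quadratic form `Q v = ⟪v, v⟫` on a real inner product space. -/
noncomputable def Qf (V : Type*) [NormedAddCommGroup V] [InnerProductSpace ℝ V] :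
    QuadraticForm ℝ V :=
  LinearMap.BilinMap.toQuadraticMap (innerₗ V)

theorem clifford_julia_well_defined
    (V : Type*) [NormedAddCommGroup V] [InnerProductSpace ℝ V]
    (n : V) (hn : ⟪n, n⟫_ℝ = 1) (p : ℕ) (hp : 2 ≤ p) (x c : V) :
    ∃ y : V,
      (CliffordAlgebra.ι (Qf V) x * CliffordAlgebra.ι (Qf V) n) ^ p *
          CliffordAlgebra.ι (Qf V) n + CliffordAlgebra.ι (Qf V) c
        = CliffordAlgebra.ι (Qf V) y := by
  set ι := CliffordAlgebra.ι (Qf V)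
  set u := ι x * ι n with hu
  have hQn : Qf V n = 1 := by simpa [Qf, LinearMap.BilinMap.toQuadraticMap_apply] using hn
  have hnn : ι n * ι n = 1 := by
    rw [CliffordAlgebra.ι_sq_scalar, hQn, map_one]
  have hswap : ι n * ι x =
      (QuadraticMap.polar (Qf V) x n) • (1 : CliffordAlgebra (Qf V)) - ι x * ι n := by
    have h := CliffordAlgebra.ι_mul_ι_add_swap (Q := Qf V) x n
    rw [Algebra.algebraMap_eq_smul_one] at h
    exact eq_sub_of_add_eq (by rw [add_comm]; exact h)
  have hsq : u * u = (QuadraticMap.polar (Qf V) x n) • u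
      - (Qf V x) • (1 : CliffordAlgebra (Qf V)) := by
    have : u * u = ι x * (ι n * ι x) * ι n := by
      rw [hu, mul_assoc, mul_assoc, mul_assoc]
    rw [this, hswap, mul_sub, sub_mul, mul_smul_comm, smul_mul_assoc, mul_one,
      ← mul_assoc (ι x) (ι x) (ι n), mul_assoc (ι x * ι x), hnn, mul_one,
      CliffordAlgebra.ι_sq_scalar, Algebra.algebraMap_eq_smul_one, ← hu]
  have key : ∀ k : ℕ, ∃ a b : ℝ,
      u ^ k = a • (1 : CliffordAlgebra (Qf V)) + b • u := by
    intro k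
    induction k with
    | zero => exact ⟨1, 0, by simp⟩
    | succ m ih =>
      obtain ⟨a, b, hab⟩ := ih
      refine ⟨-(b * Qf V x), a + b * QuadraticMap.polar (Qf V) x n, ?_⟩
      rw [pow_succ, hab, add_mul, smul_mul_assoc, one_mul, smul_mul_assoc, hsq]
      module
  obtain ⟨a, b, hab⟩ := key p
  refine ⟨a • n + b • x + c, ?_⟩
  rw [hab, map_add, map_add, map_smul, map_smul, add_mul, smul_mul_assoc, one_mul,
    smul_mul_assoc, hu, mul_assoc, hnn, mul_one]
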